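/- Over a commutative antiring S, the invertible diagonal n×n matrices form a normal subgroup of GLₙ(S); in particular, conjugation of a diagonal matrix by any permutation matrix yields a diagonal matrix. -/

import Mathlib

open Matrix

set_option maxHeartbeats 1000000

lemma zsf_sum_eq_zero {S : Type*} [CommSemiring S]
    (hzs : ∀ a b : S, a + b = 0 → a = 0 ∧ b = 0)
    {ι : Type*} (s : Finset ι) (f : ι → S) (h : ∑ i ∈ s, f i = 0) :
    ∀ i ∈ s, f i = 0 := by
  classical
  induction s using Finset.induction_on with
  | empty => simp
  | insert a s hx ih =>
    rw [Finset.sum_insert hx] at h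
    obtain ⟨h1, h2⟩ := hzs _ _ h
    intro i hi
    rcases Finset.mem_insert.mp hi with rfl | hi
    · exact h1
    · exact ih h2 i hi

/-- Over a commutative antiring, the invertible diagonal matrices form a normal subgroup of
`GLₙ(S)` (the unit group of the matrix semiring); in particular, conjugating a diagonal matrix
by a permutation matrix yields a diagonal matrix. -/
theorem stmt_12 {S : Type*} [CommSemiring S]
    (hzs : ∀ a b : S, a + b = 0 → a = 0 ∧ b = 0)
    (n : ℕ) :
    (∃ H : Subgroup (Matrix (Fin n) (Fin n) S)ˣ,
      (∀ A : (Matrix (Fin n) (Fin n) S)ˣ, A ∈ H ↔ Matrix.IsDiag (A.val)) ∧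
      H.Normal) ∧
    (∀ (σ : Equiv.Perm (Fin n)) (d : Fin n → S),
      Matrix.IsDiag
        (Equiv.Perm.permMatrix S σ * Matrix.diagonal d * (Equiv.Perm.permMatrix S σ)ᵀ)) := by
  classical
  constructor
  · -- the subgroup
    refine ⟨{ carrier := {A | Matrix.IsDiag A.val}
              mul_mem' := ?_
              one_mem' := ?_
              inv_mem' := ?_ }, fun A => Iff.rfl, ?_⟩
    · -- mul
      intro A B hA hB
      show Matrix.IsDiag ((A * B).val)
      rw [Units.val_mul]
      intro i j hij
      rw [Matrix.mul_apply]
      apply Finset.sum_eq_zero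
      intro k _
      by_cases hk : i = k
      · subst hk; rw [hB (fun h => hij h), mul_zero]
      · rw [hA hk, zero_mul]
    · -- one
      exact Matrix.isDiag_one
    · -- inv
      intro A hA
      show Matrix.IsDiag ((A⁻¹).val)
      intro i j hij
      have hm : A.val * (A⁻¹).val = 1 := A.mul_inv
      have h1 : (A.val * (A⁻¹).val) i i = 1 := by rw [hm]; exact Matrix.one_apply_eq i
      have h0 : (A.val * (A⁻¹).val) i j = 0 := by rw [hm]; exact Matrix.one_apply_ne hij
      rw [Matrix.mul_apply] at h1 h0
      have e1 : A.val i i * (A⁻¹).val i i = 1 := by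
        rw [← h1]
        rw [Finset.sum_eq_single i]
        · intro b _ hb; rw [hA (fun h => hb h.symm), zero_mul]
        · intro h; exact absurd (Finset.mem_univ i) h
      have e0 : A.val i i * (A⁻¹).val i j = 0 := by
        rw [← h0]
        rw [Finset.sum_eq_single i]
        · intro b _ hb; rw [hA (fun h => hb h.symm), zero_mul]
        · intro h; exact absurd (Finset.mem_univ i) h
      calc (A⁻¹).val i j = ((A⁻¹).val i i * A.val i i) * (A⁻¹).val i j := by
              rw [mul_comm ((A⁻¹).val i i), e1, one_mul]
        _ = (A⁻¹).val i i * (A.val i i * (A⁻¹).val i j) := by ring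
        _ = 0 := by rw [e0, mul_zero]
    · -- normal
      constructor
      intro D hD A
      show Matrix.IsDiag ((A * D * A⁻¹).val)
      rw [Units.val_mul, Units.val_mul]
      intro i j hij
      have hAB : ∀ k, A.val i k * (A⁻¹).val k j = 0 := by
        have hm : A.val * (A⁻¹).val = 1 := A.mul_inv
        have h0 : ∑ k, A.val i k * (A⁻¹).val k j = 0 := by
          rw [← Matrix.mul_apply, hm]; exact Matrix.one_apply_ne hij
        intro k
        exact zsf_sum_eq_zero hzs _ _ h0 k (Finset.mem_univ k)
      rw [Matrix.mul_apply]
      apply Finset.sum_eq_zero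
      intro l _
      rw [Matrix.mul_apply, Finset.sum_eq_single l]
      · rw [mul_comm (A.val i l), mul_assoc, hAB l, mul_zero]
      · intro k _ hk; rw [hD hk, mul_zero]
      · intro h; exact absurd (Finset.mem_univ l) h
  · -- permutation part
    intro σ d i j hij
    have h : Equiv.Perm.permMatrix S σ * Matrix.diagonal d * (Equiv.Perm.permMatrix S σ)ᵀ
        = (Matrix.diagonal d).submatrix σ σ := by
      simp only [Equiv.Perm.permMatrix, ← PEquiv.toMatrix_symm, ← Equiv.toPEquiv_symm]
      rw [PEquiv.mul_toMatrix_toPEquiv, PEquiv.toMatrix_toPEquiv_mul,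
        Matrix.submatrix_submatrix]
      simp
    rw [h, Matrix.submatrix_apply,
      Matrix.diagonal_apply_ne _ (fun h' => hij (σ.injective h'))]
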